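/- For all n ≥ 1 and k ≥ 2, the identity W_n h_k = h_{nk} − h_n holds in H², where h_k(z) = (1/(1 − z)) log((1 + z + ⋯ + z^{k−1})/k) and (W_n f)(z) = (1 + z + ⋯ + z^{n−1}) f(z^n). -/

import Mathlib

open Filter Topology
open scoped ENNReal NNReal
open scoped ComplexInnerProductSpace

/-- The Hardy space `H²(𝔻)`, modeled as the space of square-summable Taylor
coefficient sequences. -/
noncomputable abbrev H2 : Type := lp (fun _ : ℕ => ℂ) 2

/-- Evaluation of an element of `H²` at a point of the unit disk, via its power series. -/
noncomputable def eval (f : H2) (z : ℂ) : ℂ := ∑' n : ℕ, (f n) * z ^ n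

lemma ofScalars_coeff (c : ℕ → ℂ) (m : ℕ) :
    (FormalMultilinearSeries.ofScalars ℂ c).coeff m = c m := by
  show (FormalMultilinearSeries.ofScalars ℂ c m) (fun _ => 1) = c m
  rw [FormalMultilinearSeries.ofScalars_apply_eq]
  simp

lemma summable_eval (f : H2) {z : ℂ} (hz : ‖z‖ < 1) :
    Summable (fun i : ℕ => f i * z ^ i) := by
  have hg : Summable (fun i : ℕ => ‖f‖ * ‖z‖ ^ i) :=
    (summable_geometric_of_lt_one (norm_nonneg _) hz).mul_left _
  refine Summable.of_norm_bounded hg fun i => ?_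
  rw [norm_mul, norm_pow]
  exact mul_le_mul_of_nonneg_right
    (lp.norm_apply_le_norm (by norm_num) f i) (by positivity)

lemma hasFPS (f : H2) :
    HasFPowerSeriesOnBall (eval f)
      (FormalMultilinearSeries.ofScalars ℂ (fun i => f i)) 0 1 where
  r_le := by
    apply FormalMultilinearSeries.le_radius_of_bound _ ‖f‖
    intro i
    rw [FormalMultilinearSeries.ofScalars_norm]
    simpa using lp.norm_apply_le_norm (by norm_num) f i
  r_pos := one_pos
  hasSum := by
    intro y hy
    have hy' : ‖y‖ < 1 := by
      have h' : ‖y‖ₑ < 1 := by simpa using hy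
      rw [← ofReal_norm] at h'
      exact ENNReal.ofReal_lt_one.mp h'
    have := (summable_eval f hy').hasSum
    simpa [FormalMultilinearSeries.ofScalars_apply_eq, eval, smul_eq_mul,
      mul_comm, ofScalars_coeff] using this

lemma eval_inj {f g : H2} (hfg : ∀ z : ℂ, ‖z‖ < 1 → eval f z = eval g z) :
    f = g := by
  have hp := (hasFPS f).hasFPowerSeriesAt
  have hq := (hasFPS g).hasFPowerSeriesAt
  have heq : eval f =ᶠ[𝓝 (0:ℂ)] eval g := by
    have hmem : Metric.ball (0:ℂ) 1 ∈ 𝓝 (0:ℂ) :=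
      Metric.ball_mem_nhds _ one_pos
    filter_upwards [hmem] with z hz
    exact hfg z (by simpa [Metric.mem_ball, dist_eq_norm] using hz)
  have := hp.eq_formalMultilinearSeries_of_eventually hq heq
  have hcoef : (fun i => (f : ∀ _ : ℕ, ℂ) i) = fun i => (g : ∀ _ : ℕ, ℂ) i :=
    FormalMultilinearSeries.ofScalars_series_injective (𝕜 := ℂ) ℂ this
  exact lp.ext (funext fun i => congrFun hcoef i)

lemma eval_sub (f g : H2) {z : ℂ} (hz : ‖z‖ < 1) :
    eval (f - g) z = eval f z - eval g z := by
  unfold eval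
  rw [← Summable.tsum_sub (summable_eval f hz) (summable_eval g hz)]
  congr 1
  funext i
  rw [lp.coeFn_sub]
  simp [Pi.sub_apply]
  ring

lemma emetric_ball_one_eq : Metric.eball (0:ℂ) 1 = Metric.ball (0:ℂ) 1 := by
  rw [show (1 : ℝ≥0∞) = ((1:ℝ≥0) : ℝ≥0∞) by norm_num, Metric.emetric_ball_nnreal]
  norm_num

lemma eval_diffOn (f : H2) :
    DifferentiableOn ℂ (eval f) (Metric.ball (0:ℂ) 1) := by
  have h := (hasFPS f).analyticOnNhd
  rw [← emetric_ball_one_eq]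
  exact h.differentiableOn

lemma zero_of_exp_one {G : ℂ → ℂ}
    (hd : DifferentiableOn ℂ G (Metric.ball (0:ℂ) 1))
    (he : ∀ z ∈ Metric.ball (0:ℂ) 1, Complex.exp (G z) = 1) (h0 : G 0 = 0)
    {z : ℂ} (hz : z ∈ Metric.ball (0:ℂ) 1) : G z = 0 := by
  have hop : IsOpen (Metric.ball (0:ℂ) 1) := Metric.isOpen_ball
  have h0m : (0:ℂ) ∈ Metric.ball (0:ℂ) 1 := Metric.mem_ball_self one_pos
  have key : ∀ w ∈ Metric.ball (0:ℂ) 1,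
      fderivWithin ℂ G (Metric.ball (0:ℂ) 1) w = 0 := by
    intro w hw
    have hDA : DifferentiableAt ℂ G w := hd.differentiableAt (hop.mem_nhds hw)
    have h1 : HasDerivAt G (deriv G w) w := hDA.hasDerivAt
    have h2 : HasDerivAt (fun z => Complex.exp (G z))
        (Complex.exp (G w) * deriv G w) w := h1.cexp
    have heq : (fun z => Complex.exp (G z)) =ᶠ[𝓝 w] fun _ => (1:ℂ) := by
      filter_upwards [hop.mem_nhds hw] with x hx
      exact he x hx
    have h3 : HasDerivAt (fun z => Complex.exp (G z)) 0 w :=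
      (hasDerivAt_const w (1:ℂ)).congr_of_eventuallyEq heq
    have h4 : Complex.exp (G w) * deriv G w = 0 := h2.unique h3
    have h5 : deriv G w = 0 :=
      (mul_eq_zero.mp h4).resolve_left (Complex.exp_ne_zero _)
    rw [fderivWithin_of_isOpen hop hw]
    apply ContinuousLinearMap.ext_ring
    rw [← deriv, h5]
    simp
  have := (convex_ball (0:ℂ) 1).is_const_of_fderivWithin_eq_zero hd key hz h0m
  rw [this, h0]


/-- `W_n h_k = h_(nk) - h_n` for all `n ≥ 1` and `k ≥ 2`. -/
theorem Wn_hk (h : ℕ → H2)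
    (hh : ∀ k : ℕ, 1 ≤ k → eval (h k) 0 = -Real.log k ∧
      ∀ z : ℂ, ‖z‖ < 1 →
        Complex.exp ((1 - z) * eval (h k) z) = (∑ j ∈ Finset.range k, z ^ j) / k)
    (W : ℕ → H2 →L[ℂ] H2)
    (hW : ∀ n : ℕ, 1 ≤ n → ∀ f : H2, ∀ z : ℂ, ‖z‖ < 1 →
      eval (W n f) z = (∑ j ∈ Finset.range n, z ^ j) * eval f (z ^ n))
    (n k : ℕ) (hn : 1 ≤ n) (hk : 2 ≤ k) :
    W n (h k) = h (n * k) - h n := by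
  have hk1 : 1 ≤ k := by omega
  have hnk1 : 1 ≤ n * k := Nat.one_le_iff_ne_zero.mpr (by positivity)
  have hn0 : (n : ℂ) ≠ 0 := Nat.cast_ne_zero.mpr (by omega)
  have hk0 : (k : ℂ) ≠ 0 := Nat.cast_ne_zero.mpr (by omega)
  have geom : ∀ (w : ℂ) (m : ℕ),
      (1 - w) * (∑ j ∈ Finset.range m, w ^ j) = 1 - w ^ m := fun w m => by
    linear_combination -(geom_sum_mul w m)
  -- the auxiliary function
  set F : ℂ → ℂ := fun z =>
    (1 - z) * eval (h (n * k)) z - (1 - z) * eval (h n) z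
      - (1 - z) * eval (W n (h k)) z with hFdef
  have hmem : ∀ z : ℂ, z ∈ Metric.ball (0:ℂ) 1 ↔ ‖z‖ < 1 := by
    intro z; simp [Metric.mem_ball, dist_eq_norm]
  -- basic facts for z in the ball
  have hz1 : ∀ z : ℂ, ‖z‖ < 1 → (1 : ℂ) - z ≠ 0 := by
    intro z hz
    apply sub_ne_zero.mpr
    intro hcon
    rw [← hcon] at hz
    simp at hz
  have hzn : ∀ z : ℂ, ‖z‖ < 1 → ‖z ^ n‖ < 1 := by
    intro z hz
    rw [norm_pow]
    exact pow_lt_one₀ (norm_nonneg z) hz (by omega)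
  have hSne : ∀ (z : ℂ) (m : ℕ), ‖z‖ < 1 → 1 ≤ m →
      (∑ j ∈ Finset.range m, z ^ j) ≠ 0 := by
    intro z m hz hm hcon
    have hg := geom z m
    rw [hcon, mul_zero] at hg
    have : z ^ m = 1 := by linear_combination hg
    have : ‖z ^ m‖ < 1 := by
      rw [norm_pow]
      exact pow_lt_one₀ (norm_nonneg z) hz (by omega)
    rw [‹z ^ m = 1›] at this
    simp at this
  -- the splitting of the geometric sum
  have hsplit : ∀ z : ℂ, ‖z‖ < 1 →
      (∑ j ∈ Finset.range (n * k), z ^ j) =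
        (∑ j ∈ Finset.range n, z ^ j) * (∑ j ∈ Finset.range k, (z ^ n) ^ j) := by
    intro z hz
    apply mul_left_cancel₀ (hz1 z hz)
    rw [geom z (n * k), ← mul_assoc, geom z n, geom (z ^ n) k, ← pow_mul]
  -- exp (F z) = 1 on the ball
  have hexp : ∀ z ∈ Metric.ball (0:ℂ) 1, Complex.exp (F z) = 1 := by
    intro z hzmem
    have hz : ‖z‖ < 1 := (hmem z).mp hzmem
    have hC : (1 - z) * eval (W n (h k)) z =
        (1 - z ^ n) * eval (h k) (z ^ n) := by
      rw [hW n hn (h k) z hz, ← mul_assoc, geom z n]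
    rw [hFdef]
    simp only
    rw [sub_sub, Complex.exp_sub, Complex.exp_add, hC,
      (hh (n * k) hnk1).2 z hz, (hh n hn).2 z hz, (hh k hk1).2 (z ^ n) (hzn z hz),
      hsplit z hz]
    have h1 := hSne z n hz hn
    have h2 := hSne (z ^ n) k (hzn z hz) hk1
    field_simp
    exact (Nat.cast_mul n k).symm
  -- F 0 = 0
  have hF0 : F 0 = 0 := by
    have h00 : ‖(0:ℂ)‖ < 1 := by simp
    have hW0 : eval (W n (h k)) 0 = eval (h k) 0 := by
      rw [hW n hn (h k) 0 h00, zero_pow (by omega : n ≠ 0)]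
      have hs : (∑ j ∈ Finset.range n, (0:ℂ) ^ j) = 1 := by
        have := geom 0 n
        rw [zero_pow (by omega : n ≠ 0)] at this
        simpa using this
      rw [hs, one_mul]
    rw [hFdef]
    simp only [sub_zero, one_mul]
    rw [hW0, (hh (n * k) hnk1).1, (hh n hn).1, (hh k hk1).1]
    have hlog : Real.log (n * k : ℕ) = Real.log n + Real.log k := by
      push_cast
      exact Real.log_mul (by positivity) (by positivity)
    rw [hlog]
    push_cast
    ring
  -- F is differentiable on the ball
  have hFdiff : DifferentiableOn ℂ F (Metric.ball (0:ℂ) 1) := by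
    have d1 : DifferentiableOn ℂ (fun z : ℂ => 1 - z) (Metric.ball (0:ℂ) 1) :=
      (differentiable_const _).differentiableOn.sub differentiable_id.differentiableOn
    exact ((d1.mul (eval_diffOn (h (n * k)))).sub
      (d1.mul (eval_diffOn (h n)))).sub (d1.mul (eval_diffOn (W n (h k))))
  -- conclude F = 0 on the ball
  have hFzero : ∀ z : ℂ, ‖z‖ < 1 → F z = 0 := by
    intro z hz
    exact zero_of_exp_one hFdiff hexp hF0 ((hmem z).mpr hz)
  -- conclude pointwise equality of evals
  apply eval_inj
  intro z hz
  have hFz := hFzero z hz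
  rw [hFdef] at hFz
  simp only at hFz
  rw [eval_sub _ _ hz]
  apply mul_left_cancel₀ (hz1 z hz)
  linear_combination -hFz
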